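/- Every formula φ of the basic epistemic language is valid on the class of all multi-agent belief models if and only if φ is valid on the class of all multi-relational Kripke models (i.e., the belief base semantics and the Kripke semantics for the multimodal logic Kₙ have the same validities). -/
import Mathlib



/-- Explicit-belief language L₀ over atoms ℕ and agents `Fin n`. -/
inductive Form0 (n : ℕ) : Type
  | atom : ℕ → Form0 n
  | neg : Form0 n → Form0 n
  | conj : Form0 n → Form0 n → Form0 n
  | tri : Fin n → Form0 n → Form0 n

/-- Multi-agent belief base. -/
structure MBB (n : ℕ) where
  base : Fin n → Set (Form0 n)
  state : Set ℕ

/-- Satisfaction of L₀-formulas at an MBB. -/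
def sat0 {n : ℕ} (B : MBB n) : Form0 n → Prop
  | .atom p => p ∈ B.state
  | .neg a => ¬ sat0 B a
  | .conj a b => sat0 B a ∧ sat0 B b
  | .tri i a => a ∈ B.base i

/-- A correct MBB: every explicit belief is true at it. -/
def MBB.Correct {n : ℕ} (B : MBB n) : Prop := ∀ i : Fin n, ∀ a ∈ B.base i, sat0 B a

/-- Epistemic alternative relation: B Rᵢ B' iff B' satisfies everything in agent i's base at B. -/
def EpiAlt {n : ℕ} (i : Fin n) (B B' : MBB n) : Prop := ∀ a ∈ B.base i, sat0 B' a

/-- Basic epistemic language L_EL. -/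
inductive FormEL (n : ℕ) : Type
  | atom : ℕ → FormEL n
  | neg : FormEL n → FormEL n
  | conj : FormEL n → FormEL n → FormEL n
  | box : Fin n → FormEL n → FormEL n

/-- Satisfaction of L_EL at an MBM (B, C). -/
def satEL {n : ℕ} (C : Set (MBB n)) (B : MBB n) : FormEL n → Prop
  | .atom p => p ∈ B.state
  | .neg a => ¬ satEL C B a
  | .conj a b => satEL C B a ∧ satEL C B b
  | .box i a => ∀ B' ∈ C, EpiAlt i B B' → satEL C B' a

/-- Multi-relational Kripke model. -/
structure Kripke (n : ℕ) where
  W : Type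
  rel : Fin n → W → W → Prop
  val : ℕ → W → Prop

/-- Kripke satisfaction for L_EL. -/
def satK {n : ℕ} (M : Kripke n) (w : M.W) : FormEL n → Prop
  | .atom p => M.val p w
  | .neg a => ¬ satK M w a
  | .conj a b => satK M w a ∧ satK M w b
  | .box i a => ∀ v, M.rel i w v → satK M v a

/-! ### Auxiliary development -/

open Classical

/-- Subformula list. -/
def subfs {n : ℕ} : FormEL n → List (FormEL n)
  | .atom p => [.atom p]
  | .neg a => .neg a :: subfs a
  | .conj a b => .conj a b :: (subfs a ++ subfs b)
  | .box i a => .box i a :: subfs a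

lemma self_mem_subfs {n : ℕ} (ψ : FormEL n) : ψ ∈ subfs ψ := by
  cases ψ <;> simp [subfs]

lemma subfs_trans {n : ℕ} {φ ψ χ : FormEL n} (h1 : ψ ∈ subfs φ) (h2 : χ ∈ subfs ψ) :
    χ ∈ subfs φ := by
  induction φ with
  | atom p => simp [subfs] at h1; subst h1; simpa [subfs] using h2
  | neg a ih =>
    simp [subfs] at h1
    rcases h1 with h1 | h1
    · subst h1; exact h2
    · simp [subfs]; right; exact ih h1
  | conj a b iha ihb =>
    simp [subfs] at h1
    rcases h1 with h1 | h1 | h1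
    · subst h1; exact h2
    · simp [subfs]; right; left; exact iha h1
    · simp [subfs]; right; right; exact ihb h1
  | box i a ih =>
    simp [subfs] at h1
    rcases h1 with h1 | h1
    · subst h1; exact h2
    · simp [subfs]; right; exact ih h1

/-- All atoms of a formula are `< N`. -/
def atomLt {n : ℕ} : FormEL n → ℕ → Prop
  | .atom p, N => p < N
  | .neg a, N => atomLt a N
  | .conj a b, N => atomLt a N ∧ atomLt b N
  | .box _ a, N => atomLt a N

def maxAtom {n : ℕ} : FormEL n → ℕ
  | .atom p => p
  | .neg a => maxAtom a
  | .conj a b => max (maxAtom a) (maxAtom b)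
  | .box _ a => maxAtom a

lemma atomLt_mono {n : ℕ} (ψ : FormEL n) {N N' : ℕ} (h : N ≤ N') (hl : atomLt ψ N) :
    atomLt ψ N' := by
  induction ψ with
  | atom p => exact lt_of_lt_of_le hl h
  | neg a ih => exact ih hl
  | conj a b iha ihb => exact ⟨iha hl.1, ihb hl.2⟩
  | box i a ih => exact ih hl

lemma atomLt_maxAtom {n : ℕ} (ψ : FormEL n) : atomLt ψ (maxAtom ψ + 1) := by
  induction ψ with
  | atom p => exact Nat.lt_succ_self p
  | neg a ih => exact ih
  | conj a b iha ihb =>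
    exact ⟨atomLt_mono a (Nat.add_le_add_right (le_max_left _ _) 1) iha,
      atomLt_mono b (Nat.add_le_add_right (le_max_right _ _) 1) ihb⟩
  | box i a ih => exact ih

/-- Filtration: a Kripke countermodel yields one with worlds that inject into ℕ. -/
lemma countable_countermodel {n : ℕ} (φ : FormEL n) (M : Kripke n) (w : M.W)
    (h : ¬ satK M w φ) :
    ∃ (M' : Kripke n) (g : M'.W → ℕ), Function.Injective g ∧ ∃ w', ¬ satK M' w' φ := by
  classical
  set l := subfs φ with hl
  -- type of a world: truth values of all subformulas of φ
  let T : M.W → (Fin l.length → Bool) := fun v j => decide (satK M v (l.get j))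
  have agree : ∀ v u : M.W, T v = T u → ∀ ψ ∈ l, (satK M v ψ ↔ satK M u ψ) := by
    intro v u hT ψ hψ
    obtain ⟨j, hj⟩ := List.get_of_mem hψ
    have := congrFun hT j
    simp only [T, decide_eq_decide] at this
    rw [← hj]; exact this
  let M' : Kripke n :=
    { W := Fin l.length → Bool
      rel := fun i S S' => ∃ v u, M.rel i v u ∧ T v = S ∧ T u = S'
      val := fun p S => ∃ v, T v = S ∧ M.val p v }
  have truth : ∀ ψ ∈ l, ∀ v : M.W, (satK M' (T v) ψ ↔ satK M v ψ) := by
    intro ψ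
    induction ψ with
    | atom p =>
      intro hmem v
      constructor
      · rintro ⟨u, hTu, hval⟩
        exact (agree u v hTu (.atom p) hmem).mp hval
      · intro hval; exact ⟨v, rfl, hval⟩
    | neg a ih =>
      intro hmem v
      have ha : a ∈ l := subfs_trans hmem (by simp [subfs, self_mem_subfs])
      simp only [satK]
      rw [ih ha v]
    | conj a b iha ihb =>
      intro hmem v
      have ha : a ∈ l := subfs_trans hmem (by simp [subfs]; right; left; exact self_mem_subfs a)
      have hb : b ∈ l := subfs_trans hmem (by simp [subfs]; right; right; exact self_mem_subfs b)
      simp only [satK]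
      rw [iha ha v, ihb hb v]
    | box i a ih =>
      intro hmem v
      have ha : a ∈ l := subfs_trans hmem (by simp [subfs, self_mem_subfs])
      constructor
      · intro hbox u hrel
        have : satK M' (T u) a := hbox (T u) ⟨v, u, hrel, rfl, rfl⟩
        exact (ih ha u).mp this
      · intro hbox S' hrel
        obtain ⟨v', u, hrel', hTv', hTu⟩ := hrel
        have hv' : satK M v' (.box i a) := by
          have := agree v' v hTv' (.box i a) hmem
          exact this.mpr hbox
        have : satK M u a := hv' u hrel'
        rw [← hTu]
        exact (ih ha u).mpr this
  refine ⟨M', ?_⟩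
  obtain ⟨g, hg⟩ := Countable.exists_injective_nat (Fin l.length → Bool)
  refine ⟨g, hg, T w, ?_⟩
  intro hcon
  exact h ((truth φ (self_mem_subfs φ) w).mp hcon)

/-- From a Kripke model whose worlds inject into ℕ, build a pointwise-equivalent MBM
(for formulas with atoms below `N`). -/
lemma mbm_of_countable {n : ℕ} (M : Kripke n) (g : M.W → ℕ) (hg : Function.Injective g)
    (N : ℕ) :
    ∃ (C : Set (MBB n)) (Bw : M.W → MBB n),
      ∀ ψ : FormEL n, atomLt ψ N → ∀ v : M.W, (satEL C (Bw v) ψ ↔ satK M v ψ) := by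
  classical
  let name : M.W → ℕ := fun v => N + g v
  let Bw : M.W → MBB n := fun v =>
    { base := fun i => (fun u => Form0.neg (Form0.atom (name u))) '' {u | ¬ M.rel i v u}
      state := {p | p < N ∧ M.val p v} ∪ {name v} }
  let C : Set (MBB n) := Set.range Bw
  have name_mem : ∀ v u : M.W, name u ∈ (Bw v).state ↔ u = v := by
    intro v u
    constructor
    · rintro (⟨hlt, _⟩ | heq)
      · exfalso; simp only [name] at hlt; omega
      · have h2 : name u = name v := heq
        simp only [name] at h2
        exact hg (by omega)
    · rintro rfl; right; rfl
  have epi : ∀ (i : Fin n) (v u : M.W), EpiAlt i (Bw v) (Bw u) ↔ M.rel i v u := by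
    intro i v u
    constructor
    · intro h
      by_contra hrel
      have hmem : Form0.neg (Form0.atom (name u)) ∈ (Bw v).base i := ⟨u, hrel, rfl⟩
      have := h _ hmem
      simp only [sat0] at this
      exact this ((name_mem u u).mpr rfl)
    · rintro hrel a ⟨u', hu', rfl⟩
      simp only [sat0]
      intro hmem
      have : u' = u := (name_mem u u').mp hmem
      subst this
      exact hu' hrel
  refine ⟨C, Bw, ?_⟩
  intro ψ
  induction ψ with
  | atom p =>
    intro hlt v
    simp only [satEL, satK]
    constructor
    · rintro (⟨_, hval⟩ | heq)
      · exact hval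
      · exfalso
        have hp : p < N := hlt
        have h2 : p = N + g v := heq
        omega
    · intro hval; exact Or.inl ⟨hlt, hval⟩
  | neg a ih =>
    intro hlt v
    simp only [satEL, satK]
    rw [ih hlt v]
  | conj a b iha ihb =>
    intro hlt v
    simp only [satEL, satK]
    rw [iha hlt.1 v, ihb hlt.2 v]
  | box i a ih =>
    intro hlt v
    simp only [satEL, satK]
    constructor
    · intro hbox u hrel
      exact (ih hlt u).mp (hbox (Bw u) ⟨u, rfl⟩ ((epi i v u).mpr hrel))
    · rintro hbox B' ⟨u, rfl⟩ hepi
      exact (ih hlt u).mpr (hbox u ((epi i v u).mp hepi))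

/-- An MBM is a Kripke model. -/
lemma kripke_of_mbm {n : ℕ} (C : Set (MBB n)) (ψ : FormEL n) :
    ∀ B : MBB n, satK ⟨MBB n, fun i B1 B2 => B2 ∈ C ∧ EpiAlt i B1 B2,
        fun p B => p ∈ B.state⟩ B ψ ↔ satEL C B ψ := by
  induction ψ with
  | atom p => intro B; simp [satK, satEL]
  | neg a ih => intro B; simp only [satK, satEL]; rw [ih B]
  | conj a b iha ihb => intro B; simp only [satK, satEL]; rw [iha B, ihb B]
  | box i a ih =>
    intro B
    simp only [satK, satEL]
    constructor
    · intro h B' hB' hepi; exact (ih B').mp (h B' ⟨hB', hepi⟩)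
    · rintro h B' ⟨hB', hepi⟩; exact (ih B').mpr (h B' hB' hepi)

/-- the belief base semantics and the Kripke semantics have the same
L_EL-validities. -/
theorem stmt3 (n : ℕ) (φ : FormEL n) :
    (∀ (B : MBB n) (C : Set (MBB n)), satEL C B φ) ↔
      (∀ (M : Kripke n) (w : M.W), satK M w φ) := by
  constructor
  · intro hEL
    by_contra hcon
    push_neg at hcon
    obtain ⟨M, w, hw⟩ := hcon
    obtain ⟨M', g, hg, w', hw'⟩ := countable_countermodel φ M w hw
    obtain ⟨C, Bw, htruth⟩ := mbm_of_countable M' g hg (maxAtom φ + 1)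
    exact hw' ((htruth φ (atomLt_maxAtom φ) w').mp (hEL (Bw w') C))
  · intro hK B C
    exact (kripke_of_mbm C φ B).mp
      (hK ⟨MBB n, fun i B1 B2 => B2 ∈ C ∧ EpiAlt i B1 B2, fun p B => p ∈ B.state⟩ B)
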